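/- For every context-free grammar G = (N, T, P, S) in Chomsky normal form whose language does not contain the empty word, there exist a context-free grammar G' = (N', T, P', S) in Dyck normal form with L(G') = L(G) and a map h_d : N' ∪ T → N ∪ T with h_d(t) = t for every terminal t, h_d(S) = S, and h_d(X) ∈ N for every X ∈ N', such that for all sentential forms α, δ over N' ∪ T, if α derives δ in G' (in zero or more rewriting steps), then the string obtained by applying h_d letterwise to α derives the string obtained by applying h_d letterwise to δ in G. -/

import Mathlib

/-- A context-free grammar is in Chomsky normal form: every rule is of the form `X → AB`
with `A`, `B` nonterminals, or `X → a` with `a` a terminal. -/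
def IsChomskyNF {T : Type} (g : ContextFreeGrammar T) : Prop :=
  ∀ r ∈ g.rules,
    (∃ A B : g.NT, r.output = [Symbol.nonterminal A, Symbol.nonterminal B]) ∨
    (∃ a : T, r.output = [Symbol.terminal a])

/-- A context-free grammar is in Dyck normal form:
(1) it is in Chomsky normal form;
(2) if `A → a` is a rule with `A ≠ S`, then no other rule rewrites `A`;
(3) if `X → AB` and `X' → B'A` are both rules, they are the same rule
    (i.e. no *other* rule has `A` on the opposite side);
(4) if `X → AB` and `X' → A'B` are rules then `A = A'`, and if `X → AB` and `X' → AB'`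
    are rules then `B = B'`. -/
def IsDyckNF {T : Type} (g : ContextFreeGrammar T) : Prop :=
  IsChomskyNF g ∧
  (∀ r ∈ g.rules, ∀ a : T, r.output = [Symbol.terminal a] → r.input ≠ g.initial →
    ∀ r' ∈ g.rules, r'.input = r.input → r' = r) ∧
  (∀ r ∈ g.rules, ∀ r' ∈ g.rules, ∀ A B B' : g.NT,
    r.output = [Symbol.nonterminal A, Symbol.nonterminal B] →
    r'.output = [Symbol.nonterminal B', Symbol.nonterminal A] → r = r') ∧
  (∀ r ∈ g.rules, ∀ r' ∈ g.rules, ∀ A A' B B' : g.NT,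
    r.output = [Symbol.nonterminal A, Symbol.nonterminal B] →
    r'.output = [Symbol.nonterminal A', Symbol.nonterminal B'] →
    (B = B' → A = A') ∧ (A = A' → B = B'))

/-- Letterwise extension of a map on nonterminals to symbols, fixing every terminal. -/
def mapSymbol {T N N' : Type} (f : N → N') : Symbol T N → Symbol T N'
  | .terminal t => .terminal t
  | .nonterminal X => .nonterminal (f X)

namespace DyckNFProof

open ContextFreeGrammar

attribute [local instance] Classical.propDecidable

variable {T : Type}

@[simp] lemma mapSymbol_terminal {N N' : Type} (f : N → N') (t : T) :
    mapSymbol f (Symbol.terminal t) = Symbol.terminal t := rfl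

@[simp] lemma mapSymbol_nonterminal {N N' : Type} (f : N → N') (X : N) :
    mapSymbol f (Symbol.nonterminal X : Symbol T N) = Symbol.nonterminal (f X) := rfl

/-- New nonterminals: `none` is the new start symbol; `some (ρ, σ, τ, b)` represents the
left (`b = false`) or right (`b = true`) child occurrence created for the binary rule `ρ`,
where `σ` (resp. `τ`) is the rule that this left (resp. right) child is committed to use. -/
abbrev NTd (G : ContextFreeGrammar T) : Type _ :=
  Option (ContextFreeRule T G.NT × ContextFreeRule T G.NT × ContextFreeRule T G.NT × Bool)

variable {G : ContextFreeGrammar T}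

/-- Rules of `G` with a prescribed input. -/
noncomputable def childRules (G : ContextFreeGrammar T) (D : G.NT) :
    Finset (ContextFreeRule T G.NT) :=
  G.rules.filter (fun σ => σ.input = D)

lemma mem_childRules {σ : ContextFreeRule T G.NT} {D : G.NT} :
    σ ∈ childRules G D ↔ σ ∈ G.rules ∧ σ.input = D := by
  simp [childRules]

/-- The new rules obtained by letting the new nonterminal `n` simulate the rule with
output `l`. -/
noncomputable def expandAux (G : ContextFreeGrammar T) (n : NTd G) (ρ : ContextFreeRule T G.NT) :
    List (Symbol T G.NT) → Finset (ContextFreeRule T (NTd G))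
  | [Symbol.terminal a] => {⟨n, [Symbol.terminal a]⟩}
  | [Symbol.nonterminal D, Symbol.nonterminal E] =>
      (childRules G D).biUnion fun σ => (childRules G E).image fun τ =>
        ⟨n, [Symbol.nonterminal (some (ρ, σ, τ, false)),
             Symbol.nonterminal (some (ρ, σ, τ, true))]⟩
  | _ => ∅

noncomputable def expand (G : ContextFreeGrammar T) (n : NTd G) (ρ : ContextFreeRule T G.NT) :
    Finset (ContextFreeRule T (NTd G)) :=
  expandAux G n ρ ρ.output

noncomputable def binExpand (G : ContextFreeGrammar T) (ρ : ContextFreeRule T G.NT) :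
    List (Symbol T G.NT) → Finset (ContextFreeRule T (NTd G))
  | [Symbol.nonterminal D, Symbol.nonterminal E] =>
      (childRules G D).biUnion fun σ => (childRules G E).biUnion fun τ =>
        expand G (some (ρ, σ, τ, false)) σ ∪ expand G (some (ρ, σ, τ, true)) τ
  | _ => ∅

noncomputable def dRules (G : ContextFreeGrammar T) : Finset (ContextFreeRule T (NTd G)) :=
  ((childRules G G.initial).biUnion fun ρ => expand G none ρ) ∪
    G.rules.biUnion fun ρ => binExpand G ρ ρ.output

noncomputable def Gd (G : ContextFreeGrammar T) : ContextFreeGrammar T :=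
  ⟨NTd G, none, dRules G⟩

def hdMap (G : ContextFreeGrammar T) : NTd G → G.NT
  | none => G.initial
  | some (_, σ, _, false) => σ.input
  | some (_, _, τ, true) => τ.input

lemma shape_of_mem_expand {n : NTd G} {ρ : ContextFreeRule T G.NT}
    {r' : ContextFreeRule T (NTd G)} (h : r' ∈ expand G n ρ) :
    r'.input = n ∧
    ((∃ a, ρ.output = [Symbol.terminal a] ∧ r'.output = [Symbol.terminal a]) ∨
     (∃ D E σ τ, ρ.output = [Symbol.nonterminal D, Symbol.nonterminal E] ∧
        σ ∈ G.rules ∧ σ.input = D ∧ τ ∈ G.rules ∧ τ.input = E ∧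
        r'.output = [Symbol.nonterminal (some (ρ, σ, τ, false)),
                     Symbol.nonterminal (some (ρ, σ, τ, true))])) := by
  unfold expand at h
  rcases hout : ρ.output with _ | ⟨s, _ | ⟨s₂, _ | ⟨s₃, l⟩⟩⟩ <;> rw [hout] at h
  · simp [expandAux] at h
  · cases s with
    | terminal a =>
      simp only [expandAux, Finset.mem_singleton] at h
      subst h
      exact ⟨rfl, Or.inl ⟨a, rfl, rfl⟩⟩
    | nonterminal D => simp [expandAux] at h
  · cases s with
    | terminal a => simp [expandAux] at h
    | nonterminal D =>
      cases s₂ with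
      | terminal a => simp [expandAux] at h
      | nonterminal E =>
        simp only [expandAux, Finset.mem_biUnion, Finset.mem_image, mem_childRules] at h
        obtain ⟨σ, ⟨hσ, hσi⟩, τ, ⟨hτ, hτi⟩, rfl⟩ := h
        exact ⟨rfl, Or.inr ⟨D, E, σ, τ, rfl, hσ, hσi, hτ, hτi, rfl⟩⟩
  · simp [expandAux] at h

lemma mem_expand_term {n : NTd G} {ρ : ContextFreeRule T G.NT} {a : T}
    (h : ρ.output = [Symbol.terminal a]) :
    (⟨n, [Symbol.terminal a]⟩ : ContextFreeRule T (NTd G)) ∈ expand G n ρ := by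
  unfold expand
  rw [h]
  simp [expandAux]

lemma mem_expand_bin {n : NTd G} {ρ σ τ : ContextFreeRule T G.NT} {D E : G.NT}
    (h : ρ.output = [Symbol.nonterminal D, Symbol.nonterminal E])
    (hσ : σ ∈ G.rules) (hσi : σ.input = D) (hτ : τ ∈ G.rules) (hτi : τ.input = E) :
    (⟨n, [Symbol.nonterminal (some (ρ, σ, τ, false)),
          Symbol.nonterminal (some (ρ, σ, τ, true))]⟩ : ContextFreeRule T (NTd G))
      ∈ expand G n ρ := by
  unfold expand
  rw [h]
  simp only [expandAux, Finset.mem_biUnion, Finset.mem_image, mem_childRules]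
  exact ⟨σ, ⟨hσ, hσi⟩, τ, ⟨hτ, hτi⟩, rfl⟩

lemma expand_initial_subset {ρ : ContextFreeRule T G.NT} (hρ : ρ ∈ G.rules)
    (hi : ρ.input = G.initial) : expand G none ρ ⊆ dRules G := by
  intro r hr
  exact Finset.mem_union_left _ (Finset.mem_biUnion.mpr ⟨ρ, mem_childRules.mpr ⟨hρ, hi⟩, hr⟩)

lemma expand_side_subset {ρ σ τ : ContextFreeRule T G.NT} {D E : G.NT} (hρ : ρ ∈ G.rules)
    (hout : ρ.output = [Symbol.nonterminal D, Symbol.nonterminal E])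
    (hσ : σ ∈ G.rules) (hσi : σ.input = D) (hτ : τ ∈ G.rules) (hτi : τ.input = E) (b : Bool) :
    expand G (some (ρ, σ, τ, b)) (cond b τ σ) ⊆ dRules G := by
  intro r hr
  apply Finset.mem_union_right
  apply Finset.mem_biUnion.mpr
  refine ⟨ρ, hρ, ?_⟩
  rw [hout]
  simp only [binExpand, Finset.mem_biUnion, mem_childRules]
  refine ⟨σ, ⟨hσ, hσi⟩, τ, ⟨hτ, hτi⟩, ?_⟩
  cases b with
  | false => exact Finset.mem_union_left _ hr
  | true => exact Finset.mem_union_right _ hr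

/-- Every rule of the new grammar comes from `expand` at its own input, for a generator rule
whose input is `hdMap` of the new input. -/
lemma mem_dRules_elim {r' : ContextFreeRule T (NTd G)} (h : r' ∈ dRules G) :
    ∃ ρ ∈ G.rules, ρ.input = hdMap G r'.input ∧ r' ∈ expand G r'.input ρ := by
  unfold dRules at h
  rcases Finset.mem_union.mp h with h | h
  · obtain ⟨ρ, hρ, hr⟩ := Finset.mem_biUnion.mp h
    obtain ⟨hρm, hρi⟩ := mem_childRules.mp hρ
    have hin := (shape_of_mem_expand hr).1
    rw [hin]
    exact ⟨ρ, hρm, by simp [hdMap, hρi], hr⟩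
  · obtain ⟨ρ, hρ, hr⟩ := Finset.mem_biUnion.mp h
    rcases hout : ρ.output with _ | ⟨s, _ | ⟨s₂, _ | ⟨s₃, l⟩⟩⟩ <;> rw [hout] at hr
    · simp [binExpand] at hr
    · cases s <;> simp [binExpand] at hr
    · cases s with
      | terminal a => simp [binExpand] at hr
      | nonterminal D =>
        cases s₂ with
        | terminal a => simp [binExpand] at hr
        | nonterminal E =>
          simp only [binExpand, Finset.mem_biUnion, mem_childRules] at hr
          obtain ⟨σ, ⟨hσ, hσi⟩, τ, ⟨hτ, hτi⟩, hr⟩ := hr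
          rcases Finset.mem_union.mp hr with hr | hr
          · have hin := (shape_of_mem_expand hr).1
            rw [hin]
            exact ⟨σ, hσ, by simp [hdMap], hr⟩
          · have hin := (shape_of_mem_expand hr).1
            rw [hin]
            exact ⟨τ, hτ, by simp [hdMap], hr⟩
    · simp [binExpand] at hr

/-- A rule of the new grammar with a `some` input comes from `expand` with the committed
generator rule. -/
lemma mem_dRules_some {r' : ContextFreeRule T (NTd G)}
    {ρ σ τ : ContextFreeRule T G.NT} {b : Bool} (h : r' ∈ dRules G)
    (hin : r'.input = some (ρ, σ, τ, b)) :
    r' ∈ expand G (some (ρ, σ, τ, b)) (cond b τ σ) := by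
  unfold dRules at h
  rcases Finset.mem_union.mp h with h | h
  · obtain ⟨ρ', hρ', hr⟩ := Finset.mem_biUnion.mp h
    have := (shape_of_mem_expand hr).1
    rw [hin] at this
    exact absurd this (by simp)
  · obtain ⟨ρ', hρ', hr⟩ := Finset.mem_biUnion.mp h
    rcases hout : ρ'.output with _ | ⟨s, _ | ⟨s₂, _ | ⟨s₃, l⟩⟩⟩ <;> rw [hout] at hr
    · simp [binExpand] at hr
    · cases s <;> simp [binExpand] at hr
    · cases s with
      | terminal a => simp [binExpand] at hr
      | nonterminal D =>
        cases s₂ with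
        | terminal a => simp [binExpand] at hr
        | nonterminal E =>
          simp only [binExpand, Finset.mem_biUnion, mem_childRules] at hr
          obtain ⟨σ', ⟨hσ', hσi'⟩, τ', ⟨hτ', hτi'⟩, hr⟩ := hr
          rcases Finset.mem_union.mp hr with hr | hr
          · have hi := (shape_of_mem_expand hr).1
            rw [hin] at hi
            obtain ⟨rfl, rfl, rfl, rfl⟩ : ρ' = ρ ∧ σ' = σ ∧ τ' = τ ∧ (false : Bool) = b := by
              have := hi.symm
              simp only [Option.some.injEq, Prod.mk.injEq] at this
              exact ⟨this.1, this.2.1, this.2.2.1, this.2.2.2⟩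
            simpa using hr
          · have hi := (shape_of_mem_expand hr).1
            rw [hin] at hi
            obtain ⟨rfl, rfl, rfl, rfl⟩ : ρ' = ρ ∧ σ' = σ ∧ τ' = τ ∧ (true : Bool) = b := by
              have := hi.symm
              simp only [Option.some.injEq, Prod.mk.injEq] at this
              exact ⟨this.1, this.2.1, this.2.2.1, this.2.2.2⟩
            simpa using hr
    · simp [binExpand] at hr

/-- The shape of any binary rule of the new grammar. -/
lemma binary_shape {r' : ContextFreeRule T (NTd G)} (h : r' ∈ dRules G) {A B : NTd G}
    (hout : r'.output = [Symbol.nonterminal A, Symbol.nonterminal B]) :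
    ∃ ρ σ τ, A = some (ρ, σ, τ, false) ∧ B = some (ρ, σ, τ, true) := by
  obtain ⟨ρ, hρ, -, hr⟩ := mem_dRules_elim h
  rcases (shape_of_mem_expand hr).2 with ⟨a, -, ho⟩ | ⟨D, E, σ, τ, -, -, -, -, -, ho⟩
  · rw [hout] at ho; simp at ho
  · rw [hout] at ho
    simp only [List.cons.injEq, Symbol.nonterminal.injEq] at ho
    exact ⟨ρ, σ, τ, ho.1, ho.2.1⟩

/-- Mapping rules of the new grammar back to rules of `G`. -/
lemma rule_map {r' : ContextFreeRule T (NTd G)} (h : r' ∈ dRules G) :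
    ∃ r ∈ G.rules, r.input = hdMap G r'.input ∧
      r.output = r'.output.map (mapSymbol (hdMap G)) := by
  obtain ⟨ρ, hρ, hi, hr⟩ := mem_dRules_elim h
  refine ⟨ρ, hρ, hi, ?_⟩
  rcases (shape_of_mem_expand hr).2 with ⟨a, hρo, ho⟩ | ⟨D, E, σ, τ, hρo, hσ, hσi, hτ, hτi, ho⟩
  · rw [ho, hρo]; simp
  · rw [ho, hρo]
    simp [hdMap, hσi, hτi]

section general

variable {g : ContextFreeGrammar T}

lemma derives_map (g g' : ContextFreeGrammar T) (f : g'.NT → g.NT)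
    (hf : ∀ r' ∈ g'.rules, ∃ r ∈ g.rules, r.input = f r'.input ∧
      r.output = r'.output.map (mapSymbol f)) :
    ∀ α δ : List (Symbol T g'.NT), g'.Derives α δ →
      g.Derives (α.map (mapSymbol f)) (δ.map (mapSymbol f)) := by
  intro α δ h
  induction h with
  | refl => rfl
  | tail _ hp ih =>
    obtain ⟨r', hr', hrw⟩ := hp
    obtain ⟨p, q, rfl, rfl⟩ := hrw.exists_parts
    obtain ⟨r, hr, hi, ho⟩ := hf r' hr'
    refine ih.trans_produces ⟨r, hr, ?_⟩
    have h1 : (p ++ [Symbol.nonterminal r'.input] ++ q).map (mapSymbol f)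
        = p.map (mapSymbol f) ++ [Symbol.nonterminal r.input] ++ q.map (mapSymbol f) := by
      simp [hi]
    have h2 : (p ++ r'.output ++ q).map (mapSymbol f)
        = p.map (mapSymbol f) ++ r.output ++ q.map (mapSymbol f) := by
      simp [ho]
    rw [h1, h2]
    apply ContextFreeRule.rewrites_of_exists_parts

lemma derives_append_split : ∀ {w z : List (Symbol T g.NT)}, g.Derives w z →
    ∀ x y, w = x ++ y →
      ∃ z₁ z₂, z = z₁ ++ z₂ ∧ g.Derives x z₁ ∧ g.Derives y z₂ := by
  intro w z h
  induction h using Relation.ReflTransGen.head_induction_on with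
  | refl => exact fun x y hxy => ⟨x, y, hxy, by rfl, by rfl⟩
  | head hp _ ih =>
    rintro x y rfl
    obtain ⟨r, hr, hrw⟩ := hp
    obtain ⟨p, q, heq, rfl⟩ := hrw.exists_parts
    rw [List.append_assoc] at heq
    rcases List.append_eq_append_iff.mp heq with ⟨a', hp', hy⟩ | ⟨c, hx, hc⟩
    · -- rewriting inside y
      subst hp'
      obtain ⟨z₁, z₂, hz, h1, h2⟩ := ih x (a' ++ r.output ++ q) (by simp)
      refine ⟨z₁, z₂, hz, h1, Produces.trans_derives ⟨r, hr, ?_⟩ h2⟩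
      rw [hy, List.append_assoc] at *
      simpa using ContextFreeRule.rewrites_of_exists_parts r a' q
    · cases c with
      | nil =>
        -- x = p, rewriting at the start of y
        simp only [List.append_nil] at hx
        subst hx
        obtain ⟨z₁, z₂, hz, h1, h2⟩ := ih x (r.output ++ q) (by simp)
        refine ⟨z₁, z₂, hz, h1, Produces.trans_derives ⟨r, hr, ?_⟩ h2⟩
        simp only [List.nil_append] at hc
        subst hc
        simpa using ContextFreeRule.rewrites_of_exists_parts r [] q
      | cons s c' =>
        -- rewriting inside x
        simp only [List.cons_append, List.cons.injEq] at hc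
        obtain ⟨rfl, hq⟩ := hc
        subst hx hq
        obtain ⟨z₁, z₂, hz, h1, h2⟩ := ih (p ++ r.output ++ c') y (by simp)
        refine ⟨z₁, z₂, hz, Produces.trans_derives ⟨r, hr, ?_⟩ h1, h2⟩
        simpa using ContextFreeRule.rewrites_of_exists_parts r p c'
  
lemma derives_terminal_eq {w : List T} {z : List (Symbol T g.NT)}
    (h : g.Derives (w.map Symbol.terminal) z) : z = w.map Symbol.terminal := by
  rcases h.eq_or_head with heq | ⟨b, hp, _⟩
  · exact heq.symm
  · exfalso
    obtain ⟨r, hr, hrw⟩ := hp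
    obtain ⟨p, q, heq, -⟩ := hrw.exists_parts
    have : Symbol.nonterminal r.input ∈ w.map (Symbol.terminal : T → Symbol T g.NT) := by
      rw [heq]; simp
    simp [List.mem_map] at this

lemma derives_ne_nil (hCNF : IsChomskyNF g) {u v : List (Symbol T g.NT)}
    (h : g.Derives u v) (hu : u ≠ []) : v ≠ [] := by
  induction h with
  | refl => exact hu
  | tail _ hp ih =>
    obtain ⟨r, hr, hrw⟩ := hp
    obtain ⟨p, q, -, rfl⟩ := hrw.exists_parts
    rcases hCNF r hr with ⟨A, B, ho⟩ | ⟨a, ho⟩ <;> simp [ho]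

end general

/-- `Gen G ρ w` : the word `w` is derivable in `G` from `ρ.input` by a derivation whose
first step is `ρ`. -/
inductive Gen (G : ContextFreeGrammar T) : ContextFreeRule T G.NT → List T → Prop
  | term {ρ : ContextFreeRule T G.NT} {a : T} (h : ρ.output = [Symbol.terminal a]) :
      Gen G ρ [a]
  | bin {ρ σ τ : ContextFreeRule T G.NT} {D E : G.NT} {u v : List T}
      (hout : ρ.output = [Symbol.nonterminal D, Symbol.nonterminal E])
      (hρ : ρ ∈ G.rules) (hσ : σ ∈ G.rules) (hσi : σ.input = D)
      (hτ : τ ∈ G.rules) (hτi : τ.input = E)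
      (hu : Gen G σ u) (hv : Gen G τ v) : Gen G ρ (u ++ v)

lemma exists_gen (hCNF : IsChomskyNF G) :
    ∀ (w : List T) (A : G.NT),
      G.Derives [Symbol.nonterminal A] (w.map Symbol.terminal) →
      ∃ ρ ∈ G.rules, ρ.input = A ∧ Gen G ρ w := by
  suffices H : ∀ (n : ℕ) (w : List T) (A : G.NT), w.length ≤ n →
      G.Derives [Symbol.nonterminal A] (w.map Symbol.terminal) →
      ∃ ρ ∈ G.rules, ρ.input = A ∧ Gen G ρ w by
    exact fun w A h => H w.length w A le_rfl h
  intro n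
  induction n with
  | zero =>
    intro w A hlen h
    rw [List.length_eq_zero_iff.mp (Nat.le_zero.mp hlen)] at h
    exact absurd rfl (derives_ne_nil hCNF h (by simp))
  | succ n ih =>
    intro w A hlen h
    rcases h.eq_or_head with heq | ⟨b, hp, hd⟩
    · exfalso
      have : Symbol.nonterminal A ∈ w.map (Symbol.terminal : T → Symbol T G.NT) := by
        rw [← heq]; simp
      simp [List.mem_map] at this
    · obtain ⟨r, hr, hrw⟩ := hp
      obtain ⟨p, q, hpq, rfl⟩ := hrw.exists_parts
      have hlen1 : p.length + (q.length + 1) = 1 := by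
        have := congrArg List.length hpq
        simpa using this.symm
      have hp0 : p = [] := List.length_eq_zero_iff.mp (by omega)
      have hq0 : q = [] := List.length_eq_zero_iff.mp (by omega)
      subst hp0 hq0
      simp only [List.nil_append, List.append_nil] at hpq hd
      have hA : r.input = A := by
        simpa [Symbol.nonterminal.injEq] using hpq.symm
      rcases hCNF r hr with ⟨D, E, hout⟩ | ⟨a, hout⟩
      · rw [hout] at hd
        obtain ⟨z₁, z₂, hz, h1, h2⟩ := derives_append_split hd
          [Symbol.nonterminal D] [Symbol.nonterminal E] rfl
        obtain ⟨u, v, rfl, rfl, rfl⟩ := List.map_eq_append_iff.mp hz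
        have hune : u ≠ [] := by
          intro hn
          subst hn
          exact derives_ne_nil hCNF h1 (by simp) (by simp)
        have hvne : v ≠ [] := by
          intro hn
          subst hn
          exact derives_ne_nil hCNF h2 (by simp) (by simp)
        have hwlen : u.length + v.length ≤ n + 1 := by
          simpa using hlen
        have hul : u.length ≤ n := by
          have := List.length_pos_iff.mpr hvne
          omega
        have hvl : v.length ≤ n := by
          have := List.length_pos_iff.mpr hune
          omega
        obtain ⟨σ, hσ, hσi, hσg⟩ := ih u D hul h1
        obtain ⟨τ, hτ, hτi, hτg⟩ := ih v E hvl h2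
        exact ⟨r, hr, hA, Gen.bin hout hr hσ hσi hτ hτi hσg hτg⟩
      · rw [hout] at hd
        have : List.map (Symbol.terminal : T → Symbol T G.NT) w
            = List.map Symbol.terminal [a] :=
          derives_terminal_eq (g := G) (w := [a]) (by simpa using hd)
        have hw : w = [a] := by
          have hinj : Function.Injective (Symbol.terminal : T → Symbol T G.NT) := by
            intro x y hxy
            simpa [Symbol.terminal.injEq] using hxy
          exact List.map_injective_iff.mpr hinj this
        subst hw
        exact ⟨r, hr, hA, Gen.term hout⟩

lemma gen_derives {ρ : ContextFreeRule T G.NT} {w : List T} (hgen : Gen G ρ w) :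
    ∀ n : NTd G, expand G n ρ ⊆ dRules G →
      (Gd G).Derives [Symbol.nonterminal n] (w.map Symbol.terminal) := by
  induction hgen with
  | @term ρ a h =>
    intro n hsub
    refine Produces.single ⟨⟨n, [Symbol.terminal a]⟩, hsub (mem_expand_term h), ?_⟩
    simpa using ContextFreeRule.Rewrites.input_output
      (r := (⟨n, [Symbol.terminal a]⟩ : ContextFreeRule T (Gd G).NT))
  | @bin ρ σ τ D E u v hout hρ hσ hσi hτ hτi hu hv ihu ihv =>
    intro n hsub
    have hrule : (⟨n, [Symbol.nonterminal (some (ρ, σ, τ, false)),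
        Symbol.nonterminal (some (ρ, σ, τ, true))]⟩ : ContextFreeRule T (NTd G))
        ∈ dRules G := hsub (mem_expand_bin hout hσ hσi hτ hτi)
    have hsubL : expand G (some (ρ, σ, τ, false)) σ ⊆ dRules G :=
      expand_side_subset hρ hout hσ hσi hτ hτi false
    have hsubR : expand G (some (ρ, σ, τ, true)) τ ⊆ dRules G :=
      expand_side_subset hρ hout hσ hσi hτ hτi true
    have step : (Gd G).Produces [Symbol.nonterminal n]
        [Symbol.nonterminal (some (ρ, σ, τ, false)),
         Symbol.nonterminal (some (ρ, σ, τ, true))] := by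
      refine ⟨_, hrule, ?_⟩
      exact ContextFreeRule.Rewrites.input_output
        (r := (⟨n, [Symbol.nonterminal (some (ρ, σ, τ, false)),
          Symbol.nonterminal (some (ρ, σ, τ, true))]⟩ : ContextFreeRule T (Gd G).NT))
    have dL := (ihu (some (ρ, σ, τ, false)) hsubL).append_right
      [Symbol.nonterminal (some (ρ, σ, τ, true))]
    have dR := (ihv (some (ρ, σ, τ, true)) hsubR).append_left (u.map Symbol.terminal)
    have : (Gd G).Derives [Symbol.nonterminal n]
        (u.map Symbol.terminal ++ v.map Symbol.terminal) :=
      step.trans_derives (Relation.ReflTransGen.trans (by simpa using dL) dR)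
    simpa using this

end DyckNFProof

/-- For every grammar `G` in Chomsky normal form whose language does not
contain the empty word, there exist a grammar `G'` in Dyck normal form with the same language
and a map `h_d` on nonterminals (extended letterwise to symbols, fixing terminals, and sending
the start symbol of `G'` to the start symbol of `G`) such that any derivation `α ⇒* δ` of `G'`
is mapped to a derivation in `G`. -/
theorem exists_dyckNF_strong {T : Type} (G : ContextFreeGrammar T)
    (hCNF : IsChomskyNF G) (hG : [] ∉ G.language) :
    ∃ (G' : ContextFreeGrammar T) (hd : G'.NT → G.NT),
      IsDyckNF G' ∧ G'.language = G.language ∧ hd G'.initial = G.initial ∧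
      ∀ α δ : List (Symbol T G'.NT), G'.Derives α δ →
        G.Derives (α.map (mapSymbol hd)) (δ.map (mapSymbol hd)) := by
  classical
  open DyckNFProof in
  refine ⟨Gd G, hdMap G, ⟨?_, ?_, ?_, ?_⟩, ?_, rfl, ?_⟩
  · -- Chomsky NF
    intro r hr
    obtain ⟨ρ, hρ, -, hre⟩ := mem_dRules_elim (G := G) hr
    rcases (shape_of_mem_expand hre).2 with ⟨a, -, ho⟩ | ⟨D, E, σ, τ, -, -, -, -, -, ho⟩
    · exact Or.inr ⟨a, ho⟩
    · exact Or.inl ⟨_, _, ho⟩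
  · -- condition (2)
    intro r hr a hout hne r' hr' hin
    obtain ⟨ρ₀, σ, τ, b, hsome⟩ : ∃ ρ₀ σ τ b, r.input = some (ρ₀, σ, τ, b) := by
      rcases hi : r.input with _ | ⟨⟨ρ₀, σ, τ, b⟩⟩
      · exact absurd hi hne
      · exact ⟨ρ₀, σ, τ, b, rfl⟩
    have hm := mem_dRules_some (G := G) hr hsome
    have hm' := mem_dRules_some (G := G) hr' (hin.trans hsome)
    -- the generator rule must have terminal output
    rcases (shape_of_mem_expand hm).2 with ⟨a', hg, ho⟩ | ⟨D, E, σ', τ', -, -, -, -, -, ho⟩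
    · rcases (shape_of_mem_expand hm').2 with ⟨a'', hg', ho'⟩ | ⟨D, E, σ', τ', hg', -, -, -, -, ho'⟩
      · have haa : a'' = a' := by
          rw [hg] at hg'
          simpa [Symbol.terminal.injEq] using hg'.symm
        have h1 := (shape_of_mem_expand hm).1
        have h2 := (shape_of_mem_expand hm').1
        apply ContextFreeRule.ext
        · rw [h1, h2]
        · rw [ho, ho', haa]
      · rw [hg] at hg'; simp at hg'
    · rw [hout] at ho; cases ho
  · -- condition (3)
    intro r hr r' hr' A B B' ho ho'
    obtain ⟨ρ, σ, τ, hA, hB⟩ := binary_shape (G := G) hr ho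
    obtain ⟨ρ', σ', τ', hB'', hA'⟩ := binary_shape (G := G) hr' ho'
    rw [hA] at hA'
    simp [Prod.ext_iff] at hA'
  · -- condition (4)
    intro r hr r' hr' A A' B B' ho ho'
    obtain ⟨ρ, σ, τ, hA, hB⟩ := binary_shape (G := G) hr ho
    obtain ⟨ρ', σ', τ', hA', hB'⟩ := binary_shape (G := G) hr' ho'
    constructor
    · intro hBB
      rw [hB, hB'] at hBB
      have h4 := Option.some.inj hBB
      rw [hA, hA', show ρ = ρ' from congrArg (fun p => p.1) h4,
        show σ = σ' from congrArg (fun p => p.2.1) h4,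
        show τ = τ' from congrArg (fun p => p.2.2.1) h4]
    · intro hAA
      rw [hA, hA'] at hAA
      have h4 := Option.some.inj hAA
      rw [hB, hB', show ρ = ρ' from congrArg (fun p => p.1) h4,
        show σ = σ' from congrArg (fun p => p.2.1) h4,
        show τ = τ' from congrArg (fun p => p.2.2.1) h4]
  · -- language equality
    ext w
    simp only [ContextFreeGrammar.mem_language_iff]
    constructor
    · intro h
      have := derives_map G (Gd G) (hdMap G) (fun r' hr' => rule_map (G := G) hr') _ _ h
      simpa [mapSymbol, List.map_map, Function.comp, Function.comp_def, hdMap, Gd] using this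
    · intro h
      obtain ⟨ρ, hρ, hi, hg⟩ := exists_gen (G := G) hCNF w G.initial h
      exact gen_derives (G := G) hg none (expand_initial_subset hρ hi)
  · -- derivation mapping
    exact derives_map G (Gd G) (hdMap G) (fun r' hr' => rule_map (G := G) hr')
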